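/- Let G be a group with finite generating set X and decidable word problem, and let H be a K-quasiconvex subgroup of G. Then the membership problem for H in G is decidable. -/

import Mathlib

/-- Evaluate a word over `X ∪ X⁻¹` (letters indexed by `Fin k`, with a sign bit)
in the group `G`, where `ρ : Fin k → G` lists the generators. -/
def evalWord {G : Type*} [Group G] {k : ℕ} (ρ : Fin k → G)
    (w : List (Fin k × Bool)) : G :=
  (w.map fun p => if p.2 then ρ p.1 else (ρ p.1)⁻¹).prod

/-- Word length of `g` with respect to the generating set `ρ`. -/
noncomputable def wl {G : Type*} [Group G] {k : ℕ} (ρ : Fin k → G) (g : G) : ℕ :=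
  sInf {n | ∃ w : List (Fin k × Bool), evalWord ρ w = g ∧ w.length = n}

/-- `ρ` is a generating set of `G`. -/
def Generates {G : Type*} [Group G] {k : ℕ} (ρ : Fin k → G) : Prop :=
  Subgroup.closure (Set.range ρ) = ⊤

/-- `w` is the label of a geodesic in the Cayley graph from `a` to `b`. -/
def IsGeodesicWord {G : Type*} [Group G] {k : ℕ} (ρ : Fin k → G)
    (a b : G) (w : List (Fin k × Bool)) : Prop :=
  evalWord ρ w = a⁻¹ * b ∧ w.length = wl ρ (a⁻¹ * b)

/-- `v` is a vertex on the path starting at `a` labeled by `w`. -/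
def VertexOn {G : Type*} [Group G] {k : ℕ} (ρ : Fin k → G)
    (a : G) (w : List (Fin k × Bool)) (v : G) : Prop :=
  ∃ i ≤ w.length, v = a * evalWord ρ (w.take i)

/-- `H` is `K`-quasiconvex: every vertex on a geodesic with endpoints in `H`
is within distance `K` of `H`. -/
def IsQuasiconvex {G : Type*} [Group G] {k : ℕ} (ρ : Fin k → G)
    (H : Subgroup G) (K : ℕ) : Prop :=
  ∀ a ∈ H, ∀ b ∈ H, ∀ w, IsGeodesicWord ρ a b w →
    ∀ v, VertexOn ρ a w v → ∃ h ∈ H, wl ρ (v⁻¹ * h) ≤ K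

/-- `G` is `δ`-hyperbolic: geodesic triangles are `δ`-thin. -/
def IsHyperbolic {G : Type*} [Group G] {k : ℕ} (ρ : Fin k → G) (δ : ℕ) : Prop :=
  ∀ a b c : G, ∀ wab wbc wac,
    IsGeodesicWord ρ a b wab → IsGeodesicWord ρ b c wbc → IsGeodesicWord ρ a c wac →
    ∀ v, VertexOn ρ a wab v →
      ∃ u, (VertexOn ρ b wbc u ∨ VertexOn ρ a wac u) ∧ wl ρ (v⁻¹ * u) ≤ δ

/-- The conjugate subgroup `g⁻¹ H g`. -/
def conjSub {G : Type*} [Group G] (g : G) (H : Subgroup G) : Subgroup G :=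
  Subgroup.map (MulAut.conj g⁻¹).toMonoidHom H

section Words
variable {G : Type*} [Group G] {k : ℕ} (ρ : Fin k → G)

def invWord (w : List (Fin k × Bool)) : List (Fin k × Bool) :=
  (w.map fun p => (p.1, !p.2)).reverse

@[simp] lemma evalWord_nil : evalWord ρ ([] : List (Fin k × Bool)) = 1 := rfl

@[simp] lemma evalWord_append (w₁ w₂ : List (Fin k × Bool)) :
    evalWord ρ (w₁ ++ w₂) = evalWord ρ w₁ * evalWord ρ w₂ := by
  simp [evalWord]

@[simp] lemma evalWord_cons (p : Fin k × Bool) (w : List (Fin k × Bool)) :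
    evalWord ρ (p :: w) = (if p.2 then ρ p.1 else (ρ p.1)⁻¹) * evalWord ρ w := by
  simp [evalWord]

@[simp] lemma invWord_length (w : List (Fin k × Bool)) : (invWord w).length = w.length := by
  simp [invWord]

lemma evalWord_invWord (w : List (Fin k × Bool)) :
    evalWord ρ (invWord w) = (evalWord ρ w)⁻¹ := by
  induction w with
  | nil => simp [invWord]
  | cons p t ih =>
      have : invWord (p :: t) = invWord t ++ [(p.1, !p.2)] := by simp [invWord]
      rw [this, evalWord_append, ih, evalWord_cons]
      cases hb : p.2 <;> simp [evalWord, hb, mul_inv_rev]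

lemma exists_word (hgen : Generates ρ) (g : G) :
    ∃ w : List (Fin k × Bool), evalWord ρ w = g := by
  have hg : g ∈ Subgroup.closure (Set.range ρ) := by rw [hgen]; trivial
  induction hg using Subgroup.closure_induction with
  | mem x hx =>
      obtain ⟨i, rfl⟩ := hx
      exact ⟨[(i, true)], by simp [evalWord]⟩
  | one => exact ⟨[], rfl⟩
  | mul x y _ _ hx hy =>
      obtain ⟨w₁, rfl⟩ := hx
      obtain ⟨w₂, rfl⟩ := hy
      exact ⟨w₁ ++ w₂, by simp⟩
  | inv x _ hx =>
      obtain ⟨w, rfl⟩ := hx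
      exact ⟨invWord w, evalWord_invWord ρ w⟩

lemma wl_spec (hgen : Generates ρ) (g : G) :
    ∃ w : List (Fin k × Bool), evalWord ρ w = g ∧ w.length = wl ρ g := by
  have hne : {n | ∃ w : List (Fin k × Bool), evalWord ρ w = g ∧ w.length = n}.Nonempty := by
    obtain ⟨w, hw⟩ := exists_word ρ hgen g
    exact ⟨w.length, w, hw, rfl⟩
  exact Nat.sInf_mem hne

lemma wl_le {g : G} {w : List (Fin k × Bool)} (hw : evalWord ρ w = g) :
    wl ρ g ≤ w.length :=
  Nat.sInf_le ⟨w, hw, rfl⟩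

@[simp] lemma wl_one : wl ρ (1 : G) = 0 :=
  Nat.le_zero.mp (wl_le ρ (w := []) rfl)

lemma wl_mul_le (hgen : Generates ρ) (a b : G) :
    wl ρ (a * b) ≤ wl ρ a + wl ρ b := by
  obtain ⟨wa, ha, hla⟩ := wl_spec ρ hgen a
  obtain ⟨wb, hb, hlb⟩ := wl_spec ρ hgen b
  calc wl ρ (a * b) ≤ (wa ++ wb).length := wl_le ρ (by simp [ha, hb])
    _ = wl ρ a + wl ρ b := by simp [hla, hlb]

lemma wl_inv_le (hgen : Generates ρ) (a : G) : wl ρ a⁻¹ ≤ wl ρ a := by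
  obtain ⟨wa, ha, hla⟩ := wl_spec ρ hgen a
  calc wl ρ a⁻¹ ≤ (invWord wa).length := wl_le ρ (by rw [evalWord_invWord, ha])
    _ = wl ρ a := by simp [hla]

end Words

section B
variable {k : ℕ}

/-- all letters -/
def letters (k : ℕ) : List (Fin k × Bool) :=
  (List.finRange k).flatMap fun i => [(i, false), (i, true)]

lemma mem_letters (p : Fin k × Bool) : p ∈ letters k := by
  rcases p with ⟨i, b⟩
  cases b <;> simp [letters, List.mem_flatMap]

/-- all words of length ≤ L -/
def allWords (k : ℕ) : ℕ → List (List (Fin k × Bool))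
  | 0 => [[]]
  | L + 1 => allWords k L ++ ((letters k).flatMap fun p => (allWords k L).map (p :: ·))

lemma mem_allWords : ∀ (L : ℕ) (w : List (Fin k × Bool)), w.length ≤ L → w ∈ allWords k L := by
  intro L
  induction L with
  | zero => intro w hw; simp [allWords, List.length_eq_zero_iff.mp (Nat.le_zero.mp hw)]
  | succ L ih =>
      intro w hw
      cases w with
      | nil => exact List.mem_append_left _ (ih [] (Nat.zero_le _))
      | cons p t =>
          refine List.mem_append_right _ ?_
          simp only [List.mem_flatMap]
          exact ⟨p, mem_letters p, List.mem_map.mpr ⟨t, ih t (Nat.succ_le_succ_iff.mp hw), rfl⟩⟩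

/-- one step of product saturation -/
def candStep (U c : List (List (Fin k × Bool))) : List (List (Fin k × Bool)) :=
  c ++ U.flatMap fun u => c.map (u ++ ·)

/-- all products of at most n elements of U (as words) -/
def cand (U : List (List (Fin k × Bool))) : ℕ → List (List (Fin k × Bool)) :=
  fun n => Nat.rec [[]] (fun _ IH => candStep U IH) n

lemma cand_succ (U : List (List (Fin k × Bool))) (n : ℕ) :
    cand U (n + 1) = candStep U (cand U n) := rfl

lemma cand_mono (U : List (List (Fin k × Bool))) {m n : ℕ} (h : m ≤ n) :
    cand U m ⊆ cand U n := by
  induction h with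
  | refl => exact fun _ h => h
  | step _ ih => exact fun c hc => List.mem_append_left _ (ih hc)

lemma nil_mem_cand (U : List (List (Fin k × Bool))) (n : ℕ) : [] ∈ cand U n :=
  cand_mono U (Nat.zero_le n) (by simp [cand])

lemma cand_complete (U : List (List (Fin k × Bool))) :
    ∀ (n : ℕ) (l : List (List (Fin k × Bool))), (∀ u ∈ l, u ∈ U) → l.length ≤ n →
      l.flatten ∈ cand U n := by
  intro n
  induction n with
  | zero =>
      intro l _ hl
      simp [List.length_eq_zero_iff.mp (Nat.le_zero.mp hl), cand]
  | succ n ih =>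
      intro l hU hl
      cases l with
      | nil => exact nil_mem_cand U _
      | cons u t =>
          rw [cand_succ]
          refine List.mem_append_right _ ?_
          simp only [List.mem_flatMap]
          refine ⟨u, hU u (by simp), List.mem_map.mpr
            ⟨t.flatten, ih t (fun v hv => hU v (by simp [hv])) (Nat.succ_le_succ_iff.mp hl), by simp⟩⟩

lemma primrec_candStep (U : List (List (Fin k × Bool))) : Primrec (candStep U) :=
  Primrec.list_append.comp .id
    (Primrec.list_flatMap (Primrec.const U)
      (Primrec.list_map (Primrec.fst) (Primrec.list_append.comp (Primrec.snd.comp .fst) .snd).to₂).to₂)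

lemma primrec_cand (U : List (List (Fin k × Bool))) : Primrec (cand U) :=
  Primrec.nat_rec₁ [[]] ((primrec_candStep U).comp .snd).to₂

end B


section C
variable {α β : Type*} [Primcodable α] [Primcodable β]

lemma rec_any_eq (f₀ : β → Bool) (L : List β) :
    ∀ n, (Nat.rec (motive := fun _ => Bool) false
      (fun i acc => cond acc true (((L[i]?).map f₀).getD false)) n) = (L.take n).any f₀ := by
  intro n
  induction n with
  | zero => simp
  | succ n ih =>
      rw [List.take_succ]
      simp only [List.any_append]
      rw [← ih]
      show (cond (Nat.rec _ _ n : Bool) true _) = _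
      cases hb : (Nat.rec (motive := fun _ => Bool) false
        (fun i acc => cond acc true (((L[i]?).map f₀).getD false)) n) <;>
        cases h : L[n]? <;> simp_all <;>
        (intro x hx; rw [List.getElem?_eq_none h] at hx; cases hx)

lemma computable_list_any {f₀ : β → Bool} (hf₀ : Computable f₀)
    {g₁ : α → List β} (hg₁ : Computable g₁) :
    Computable fun a => (g₁ a).any f₀ := by
  have hh : Computable₂ fun (a : α) (p : ℕ × Bool) =>
      cond p.2 true ((((g₁ a)[p.1]?).map f₀).getD false) := by
    have hget : Computable fun (q : α × ℕ × Bool) => (g₁ q.1)[q.2.1]? :=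
      Computable.list_getElem?.comp (hg₁.comp .fst) (Computable.fst.comp .snd)
    exact Computable.cond (Computable.snd.comp .snd) (Computable.const true)
      (Computable.option_getD (Computable.option_map hget (hf₀.comp .snd).to₂)
        (Computable.const false))
  have := Computable.nat_rec (f := fun a => (g₁ a).length) (g := fun _ => false)
    (h := fun (a : α) (p : ℕ × Bool) =>
      cond p.2 true ((((g₁ a)[p.1]?).map f₀).getD false))
    (Computable.list_length.comp hg₁) (Computable.const false) hh
  refine this.of_eq fun a => ?_
  rw [rec_any_eq f₀ (g₁ a) (g₁ a).length, List.take_length]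

end C


section Main
variable {G : Type*} [Group G] {k : ℕ}

lemma cand_sound (ρ : Fin k → G) (H : Subgroup G) (U : List (List (Fin k × Bool)))
    (hUmem : ∀ u ∈ U, evalWord ρ u ∈ H) :
    ∀ n, ∀ c ∈ cand U n, evalWord ρ c ∈ H := by
  intro n
  induction n with
  | zero =>
      intro c hc
      rw [show cand U 0 = [[]] from rfl, List.mem_singleton] at hc
      subst hc; simpa using H.one_mem
  | succ n ih =>
      intro c hc
      rcases List.mem_append.mp hc with h | h
      · exact ih c h
      · obtain ⟨u, hu, hc⟩ := List.mem_flatMap.mp h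
        obtain ⟨c', hc', rfl⟩ := List.mem_map.mp hc
        rw [evalWord_append]
        exact H.mul_mem (hUmem u hu) (ih c' hc')

end Main

/-- The membership problem for a `K`-quasiconvex subgroup of a finitely generated
group with decidable word problem is decidable. -/
theorem membership_decidable_of_quasiconvex
    {G : Type*} [Group G] {k : ℕ} (ρ : Fin k → G) (hgen : Generates ρ)
    (hwp : ∃ f : List (Fin k × Bool) → Bool, Computable f ∧
      ∀ w, f w = true ↔ evalWord ρ w = 1)
    (H : Subgroup G) (K : ℕ) (hqc : IsQuasiconvex ρ H K) :
    ∃ f : List (Fin k × Bool) → Bool, Computable f ∧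
      ∀ w, f w = true ↔ evalWord ρ w ∈ H := by
  classical
  obtain ⟨f₀, hf₀c, hf₀⟩ := hwp
  set U : List (List (Fin k × Bool)) :=
    (allWords k (2*K+1)).filter (fun u => decide (evalWord ρ u ∈ H)) with hUdef
  have hUmem : ∀ u ∈ U, evalWord ρ u ∈ H := by
    intro u hu
    have := (List.mem_filter.mp hu).2
    simpa using this
  have hUcomplete : ∀ s ∈ H, wl ρ s ≤ 2*K+1 → ∃ c ∈ U, evalWord ρ c = s := by
    intro s hs hlen
    obtain ⟨w, hw, hwl⟩ := wl_spec ρ hgen s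
    exact ⟨w, List.mem_filter.mpr ⟨mem_allWords _ w (by omega), by simp [hw, hs]⟩, hw⟩
  set g₁ : List (Fin k × Bool) → List (List (Fin k × Bool)) :=
    fun w => (cand U w.length).map (fun c => invWord w ++ c) with hg₁def
  refine ⟨fun w => (g₁ w).any f₀, ?_, ?_⟩
  · -- computability
    apply computable_list_any hf₀c
    have hinv : Primrec (invWord (k := k)) :=
      Primrec.list_reverse.comp (Primrec.list_map .id
        ((Primrec.fst.comp .snd).pair (Primrec.not.comp (Primrec.snd.comp .snd))))
    have happ : Primrec (fun p : List (Fin k × Bool) × List (Fin k × Bool) =>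
        invWord p.1 ++ p.2) :=
      Primrec.list_append.comp (hinv.comp .fst) .snd
    have hg₁ : Primrec g₁ :=
      Primrec.list_map ((primrec_cand U).comp Primrec.list_length) happ.to₂
    exact hg₁.to_comp
  · -- correctness
    intro w
    rw [List.any_eq_true]
    constructor
    · rintro ⟨c', hc', hfc⟩
      obtain ⟨c, hcmem, rfl⟩ := List.mem_map.mp hc'
      have h1 : evalWord ρ (invWord w ++ c) = 1 := (hf₀ _).mp hfc
      rw [evalWord_append, evalWord_invWord] at h1
      have : evalWord ρ c = evalWord ρ w := by
        have := inv_mul_eq_one.mp h1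
        exact this.symm
      rw [← this]
      exact cand_sound ρ H U hUmem _ c hcmem
    · intro hgH
      set g : G := evalWord ρ w with hgdef
      set n₀ : ℕ := wl ρ g with hn₀def
      obtain ⟨u, hu, hlenu⟩ := wl_spec ρ hgen g
      have hn₀w : n₀ ≤ w.length := wl_le ρ rfl
      have hgeo : IsGeodesicWord ρ 1 g u := by
        constructor <;> simp [hu, hlenu, ← hn₀def]
      have key : ∀ i : ℕ, ∃ h, h ∈ H ∧ wl ρ ((evalWord ρ (u.take i))⁻¹ * h) ≤ K ∧
          (i = 0 → h = 1) ∧ (n₀ ≤ i → h = g) := by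
        intro i
        by_cases h0 : i = 0
        · subst h0
          refine ⟨1, H.one_mem, by simp, fun _ => rfl, ?_⟩
          intro hn
          have hu0 : u = [] := List.length_eq_zero_iff.mp (by omega)
          rw [← hu, hu0]
          rfl
        by_cases hn : n₀ ≤ i
        · refine ⟨g, hgH, ?_, fun h => absurd h h0, fun _ => rfl⟩
          have : u.take i = u := List.take_of_length_le (by omega)
          rw [this, hu]
          simp
        · have hv : VertexOn ρ 1 u (evalWord ρ (u.take i)) :=
            ⟨i, by omega, by rw [one_mul]⟩
          obtain ⟨h, hH, hK⟩ := hqc 1 H.one_mem g hgH u hgeo _ hv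
          exact ⟨h, hH, hK, fun h' => absurd h' h0, fun h' => absurd h' hn⟩
      choose hh hhH hhK hh0 hhn using key
      have hone : hh 0 = 1 := hh0 0 rfl
      have hlast : hh n₀ = g := hhn n₀ le_rfl
      -- bound on the steps
      have hstepH : ∀ i, (hh i)⁻¹ * hh (i+1) ∈ H := fun i =>
        H.mul_mem (H.inv_mem (hhH i)) (hhH (i+1))
      have hstepwl : ∀ i < n₀, wl ρ ((hh i)⁻¹ * hh (i+1)) ≤ 2*K+1 := by
        intro i hi
        have hiu : i < u.length := by omega
        have htake : u.take (i+1) = u.take i ++ [u[i]] := by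
          rw [List.take_succ, List.getElem?_eq_getElem hiu]
          rfl
        have hvstep : (evalWord ρ (u.take i))⁻¹ * evalWord ρ (u.take (i+1))
            = evalWord ρ [u[i]] := by
          rw [htake, evalWord_append]
          group
        have hwlB : wl ρ ((evalWord ρ (u.take i))⁻¹ * evalWord ρ (u.take (i+1))) ≤ 1 := by
          rw [hvstep]
          exact wl_le ρ rfl
        have hid : (hh i)⁻¹ * hh (i+1) =
            ((evalWord ρ (u.take i))⁻¹ * hh i)⁻¹ *
              (((evalWord ρ (u.take i))⁻¹ * evalWord ρ (u.take (i+1))) *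
               ((evalWord ρ (u.take (i+1)))⁻¹ * hh (i+1))) := by
          group
        calc wl ρ ((hh i)⁻¹ * hh (i+1)) = _ := by rw [hid]
          _ ≤ wl ρ ((evalWord ρ (u.take i))⁻¹ * hh i)⁻¹ +
              wl ρ (((evalWord ρ (u.take i))⁻¹ * evalWord ρ (u.take (i+1))) *
               ((evalWord ρ (u.take (i+1)))⁻¹ * hh (i+1))) := wl_mul_le ρ hgen _ _
          _ ≤ wl ρ ((evalWord ρ (u.take i))⁻¹ * hh i)⁻¹ +
              (wl ρ ((evalWord ρ (u.take i))⁻¹ * evalWord ρ (u.take (i+1))) +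
               wl ρ ((evalWord ρ (u.take (i+1)))⁻¹ * hh (i+1))) :=
            Nat.add_le_add_left (wl_mul_le ρ hgen _ _) _
          _ ≤ K + (1 + K) := by
            refine Nat.add_le_add (le_trans (wl_inv_le ρ hgen _) (hhK i)) ?_
            exact Nat.add_le_add hwlB (hhK (i+1))
          _ ≤ 2*K+1 := by omega
      -- choose words for the steps
      have key2 : ∀ i, ∃ c, i < n₀ → c ∈ U ∧ evalWord ρ c = (hh i)⁻¹ * hh (i+1) := by
        intro i
        by_cases hi : i < n₀
        · obtain ⟨c, hcU, hc⟩ := hUcomplete _ (hstepH i) (hstepwl i hi)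
          exact ⟨c, fun _ => ⟨hcU, hc⟩⟩
        · exact ⟨[], fun h => absurd h hi⟩
      choose cw hcw using key2
      have tel : ∀ m, m ≤ n₀ →
          evalWord ρ (((List.range m).map cw).flatten) = hh m := by
        intro m
        induction m with
        | zero => intro _; simpa using hone.symm
        | succ m ih =>
            intro hm
            rw [List.range_succ, List.map_append, List.flatten_append, evalWord_append,
              ih (by omega)]
            simp only [List.map_singleton, List.flatten_cons, List.flatten_nil,
              List.append_nil]
            rw [(hcw m (by omega)).2]
            group
      set l : List (List (Fin k × Bool)) := (List.range n₀).map cw with hldef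
      have hlU : ∀ u' ∈ l, u' ∈ U := by
        intro u' hu'
        obtain ⟨i, hi, rfl⟩ := List.mem_map.mp hu'
        exact (hcw i (List.mem_range.mp hi)).1
      have hflat : l.flatten ∈ cand U w.length :=
        cand_complete U w.length l hlU (by simp [hldef, hn₀w])
      refine ⟨invWord w ++ l.flatten, List.mem_map.mpr ⟨l.flatten, hflat, rfl⟩, ?_⟩
      rw [hf₀, evalWord_append, evalWord_invWord, tel n₀ le_rfl, hlast]
      rw [hgdef, inv_mul_cancel]
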